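/- For every integer n ≥ 2, setting d = 2^⌊n/2⌋ and letting ψ := (1/√d) Σ_{j=1}^d e_j ⊗ e_j ∈ ℂ^d ⊗ ℂ^d be the maximally entangled unit vector, there exist Hermitian d×d matrices A_s (s ∈ {0,1}^n) and B_t (t ∈ {1,…,n}) with A_s² = I and B_t² = I such that for every s ∈ {0,1}^n and t ∈ {1,…,n}, Re⟨ψ, (A_s ⊗ B_t) ψ⟩ = (−1)^{s_t}/√n; consequently this INDEX^n strategy has bias exactly 1/√n. -/

import Mathlib

open Matrix BigOperators Finset Kronecker

namespace IndexOpt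

abbrev V (k : ℕ) := Fin k → ZMod 2

noncomputable def sgn (z : ZMod 2) : ℂ := if z = 0 then 1 else -1

lemma z2cases : ∀ u : ZMod 2, u = 0 ∨ u = 1 := by decide

lemma sgn_zero : sgn 0 = 1 := by simp [sgn]
lemma sgn_one : sgn 1 = -1 := by simp [sgn]

lemma sgn_add (u v : ZMod 2) : sgn (u + v) = sgn u * sgn v := by
  rcases z2cases u with h | h <;> rcases z2cases v with h' | h' <;>
    subst h <;> subst h' <;>
    simp [sgn, (by decide : (1 + 1 : ZMod 2) = 0), (by decide : (1 : ZMod 2) ≠ 0)]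

lemma sgn_mul_self (u : ZMod 2) : sgn u * sgn u = 1 := by
  rcases z2cases u with h | h <;> subst h <;> simp [sgn, (by decide : (1 : ZMod 2) ≠ 0)]

lemma star_sgn (u : ZMod 2) : star (sgn u) = sgn u := by
  rcases z2cases u with h | h <;> subst h <;> simp [sgn, (by decide : (1 : ZMod 2) ≠ 0)]

lemma sgn_natCast (m : ℕ) : sgn ((m : ZMod 2)) = (-1 : ℂ) ^ m := by
  induction m with
  | zero => simp [sgn_zero]
  | succ m ih => rw [Nat.cast_succ, sgn_add, ih, sgn_one, pow_succ]

variable {k : ℕ}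

noncomputable def dotz (a b : V k) : ZMod 2 := ∑ j, a j * b j

def sig (a b : V k) : ℕ := ∑ j, (a j * b j).val

lemma dotz_comm (a b : V k) : dotz a b = dotz b a := by
  unfold dotz; exact Finset.sum_congr rfl fun j _ => mul_comm _ _

lemma sig_cast (a b : V k) : ((sig a b : ℕ) : ZMod 2) = dotz a b := by
  unfold sig dotz
  push_cast
  exact Finset.sum_congr rfl fun j _ => ZMod.natCast_val _ |>.trans (ZMod.cast_id _ _)

lemma sgn_dotz_eq (a b : V k) : sgn (dotz a b) = (-1 : ℂ) ^ sig a b := by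
  rw [← sig_cast, sgn_natCast]

lemma dotz_add_right (b y a : V k) : dotz b (y + a) = dotz b y + dotz b a := by
  unfold dotz
  rw [← Finset.sum_add_distrib]
  exact Finset.sum_congr rfl fun j _ => by simp [mul_add]

lemma add_add_self (y a : V k) : y + a + a = y := by
  funext i
  show y i + a i + a i = y i
  rw [add_assoc, CharTwo.add_self_eq_zero, add_zero]

lemma eq_add_comm (x y a : V k) : x = y + a ↔ y = x + a := by
  constructor <;> (rintro rfl; rw [add_add_self])

noncomputable def P (a b : V k) : Matrix (V k) (V k) ℂ :=
  Matrix.of fun x y =>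
    Complex.I ^ sig a b * sgn (dotz b y) * (if x = y + a then 1 else 0)

lemma P_apply (a b x y : V k) :
    P a b x y = Complex.I ^ sig a b * sgn (dotz b y) * (if x = y + a then 1 else 0) := rfl

lemma P_mul_apply (a b a' b' x y : V k) :
    (P a b * P a' b') x y =
      Complex.I ^ sig a b * Complex.I ^ sig a' b' *
        (sgn (dotz b (y + a')) * sgn (dotz b' y)) *
        (if x = y + a' + a then 1 else 0) := by
  rw [Matrix.mul_apply, Finset.sum_eq_single (y + a')]
  · rw [P_apply, P_apply, if_pos (rfl : y + a' = y + a')]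
    ring
  · intro z _ hz
    rw [P_apply a' b' z y, if_neg hz]
    ring
  · simp

lemma phase_sq (a b : V k) :
    Complex.I ^ sig a b * Complex.I ^ sig a b * sgn (dotz b a) = 1 := by
  rw [← mul_pow, Complex.I_mul_I, dotz_comm, sgn_dotz_eq, ← mul_pow]
  norm_num

lemma star_phase (a b : V k) :
    star (Complex.I ^ sig a b) = (-1 : ℂ) ^ sig a b * Complex.I ^ sig a b := by
  rw [star_pow, Complex.star_def, Complex.conj_I, neg_pow]

lemma P_isHermitian (a b : V k) : (P a b).IsHermitian := by
  ext x y
  rw [Matrix.conjTranspose_apply, P_apply, P_apply]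
  by_cases h : x = y + a
  · have h' : y = x + a := (eq_add_comm x y a).mp h
    rw [if_pos h, if_pos h', h, dotz_add_right, sgn_add]
    simp only [mul_one, star_mul', star_sgn, star_phase]
    have hsgn : sgn (dotz b a) = (-1 : ℂ) ^ sig a b := by
      rw [dotz_comm b a, sgn_dotz_eq]
    have hsq : ((-1 : ℂ) ^ sig a b) * ((-1 : ℂ) ^ sig a b) = 1 := by
      rw [← mul_pow]; norm_num
    rw [hsgn]
    linear_combination Complex.I ^ sig a b * sgn (dotz b y) * hsq
  · have h' : y ≠ x + a := fun hh => h ((eq_add_comm y x a).mp hh)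
    rw [if_neg h, if_neg h']
    simp

lemma P_sq (a b : V k) : P a b * P a b = 1 := by
  ext x y
  rw [P_mul_apply, add_add_self, Matrix.one_apply]
  by_cases h : x = y
  · rw [if_pos h, dotz_add_right, sgn_add, mul_one]
    have := phase_sq a b
    linear_combination sgn (dotz b y) * sgn (dotz b y) * this + sgn_mul_self (dotz b y)
  · rw [if_neg h, mul_zero]

lemma P_anticomm {a b a' b' : V k} (h : dotz b a' + dotz b' a = 1) :
    P a b * P a' b' = -(P a' b' * P a b) := by
  ext x y
  rw [Matrix.neg_apply, P_mul_apply, P_mul_apply]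
  have hc : y + a + a' = y + a' + a := by
    rw [add_assoc, add_assoc, add_comm a a']
  rw [hc, dotz_add_right, dotz_add_right, sgn_add, sgn_add]
  have key : sgn (dotz b a') = -sgn (dotz b' a) := by
    have : dotz b a' = 1 + dotz b' a := by
      rw [← h, add_assoc, CharTwo.add_self_eq_zero, add_zero]
    rw [this, sgn_add, sgn_one]; ring
  rw [key]
  ring

def ga (k u : ℕ) : V k := fun i => if (i : ℕ) = u / 2 then 1 else 0

def gb (k u : ℕ) : V k := fun i =>
  if (i : ℕ) < u / 2 then 1 else if (i : ℕ) = u / 2 then ((u % 2 : ℕ) : ZMod 2) else 0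

noncomputable def C (k u : ℕ) : Matrix (V k) (V k) ℂ := P (ga k u) (gb k u)

lemma dotz_ga (b : V k) (v : ℕ) :
    dotz b (ga k v) = if h : v / 2 < k then b ⟨v / 2, h⟩ else 0 := by
  unfold dotz ga
  split
  · next h =>
    rw [Finset.sum_eq_single (⟨v / 2, h⟩ : Fin k)]
    · simp
    · intro i _ hi
      have : (i : ℕ) ≠ v / 2 := fun hh => hi (Fin.ext hh)
      simp [this]
    · simp
  · next h =>
    apply Finset.sum_eq_zero
    intro i _
    have : (i : ℕ) ≠ v / 2 := fun hh => h (hh ▸ i.isLt)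
    simp [this]

lemma anticomm_cond {u v : ℕ} (hu : u < 2 * k + 1) (hv : v < 2 * k + 1) (huv : u ≠ v) :
    dotz (gb k u) (ga k v) + dotz (gb k v) (ga k u) = 1 := by
  rw [dotz_ga, dotz_ga]
  rcases lt_trichotomy (u / 2) (v / 2) with hlt | heq | hgt
  · have hku : u / 2 < k := by omega
    rw [dif_pos hku]
    have hgbv : gb k v ⟨u / 2, hku⟩ = 1 := by simp [gb, hlt]
    rw [hgbv]
    split
    · next h =>
      have c1 : ¬ (v / 2 < u / 2) := by omega
      have c2 : ¬ (v / 2 = u / 2) := by omega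
      have : gb k u ⟨v / 2, h⟩ = 0 := by
        simp only [gb, Fin.val_mk, if_neg c1, if_neg c2]
      rw [this, zero_add]
    · rw [zero_add]
  · have hk : u / 2 < k := by omega
    have hk' : v / 2 < k := by omega
    rw [dif_pos hk', dif_pos hk]
    have h1 : gb k u ⟨v / 2, hk'⟩ = ((u % 2 : ℕ) : ZMod 2) := by
      simp [gb, heq, (by omega : ¬ (v / 2 < u / 2))]
    have h2 : gb k v ⟨u / 2, hk⟩ = ((v % 2 : ℕ) : ZMod 2) := by
      simp [gb, heq, (by omega : ¬ (u / 2 < v / 2))]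
    rw [h1, h2, ← Nat.cast_add]
    have : u % 2 + v % 2 = 1 := by omega
    rw [this, Nat.cast_one]
  · have hkv : v / 2 < k := by omega
    rw [dif_pos hkv]
    have hgbu : gb k u ⟨v / 2, hkv⟩ = 1 := by simp [gb, hgt]
    rw [hgbu]
    split
    · next h =>
      have c1 : ¬ (u / 2 < v / 2) := by omega
      have c2 : ¬ (u / 2 = v / 2) := by omega
      have : gb k v ⟨u / 2, h⟩ = 0 := by
        simp only [gb, Fin.val_mk, if_neg c1, if_neg c2]
      rw [this, add_zero]
    · rw [add_zero]

lemma C_isHermitian (u : ℕ) : (C k u).IsHermitian := P_isHermitian _ _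

lemma C_sq (u : ℕ) : C k u * C k u = 1 := P_sq _ _

lemma C_anticomm {u v : ℕ} (hu : u < 2 * k + 1) (hv : v < 2 * k + 1) (huv : u ≠ v) :
    C k u * C k v = -(C k v * C k u) :=
  P_anticomm (anticomm_cond hu hv huv)

lemma card_V : Fintype.card (V k) = 2 ^ k := by
  simp [Fintype.card_fun, ZMod.card]

lemma C_trace {u v : ℕ} (hu : u < 2 * k + 1) (hv : v < 2 * k + 1) :
    Matrix.trace (C k u * C k v) = if u = v then ((2 : ℂ) ^ k) else 0 := by
  split
  · next h =>
    subst h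
    rw [C_sq, Matrix.trace_one, card_V]
    norm_num
  · next h =>
    have h1 : Matrix.trace (C k u * C k v) = -Matrix.trace (C k u * C k v) := by
      conv_lhs => rw [Matrix.trace_mul_comm, C_anticomm hv hu (Ne.symm h)]
      rw [Matrix.trace_neg]
    have h2 : (2 : ℂ) * Matrix.trace (C k u * C k v) = 0 := by linear_combination h1
    exact (mul_eq_zero.mp h2).resolve_left two_ne_zero

lemma sum_offdiag_cancel {n : ℕ} {M : Type*} [AddCommGroup M] [Module ℂ M]
    (g : Fin n → Fin n → M) (hg : ∀ t t', t ≠ t' → g t t' = -g t' t) :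
    ∑ t, ∑ t', g t t' = ∑ t, g t t := by
  rw [← Finset.sum_product']
  rw [← Finset.diag_union_offDiag (Finset.univ : Finset (Fin n)),
    Finset.sum_union (Finset.disjoint_diag_offDiag _)]
  have hdiag : ∑ p ∈ (Finset.univ : Finset (Fin n)).diag, g p.1 p.2 = ∑ t, g t t := by
    rw [Finset.sum_diag]
  have hoff : ∑ p ∈ (Finset.univ : Finset (Fin n)).offDiag, g p.1 p.2 = 0 := by
    have hswap : ∑ p ∈ (Finset.univ : Finset (Fin n)).offDiag, g p.1 p.2 =
        ∑ p ∈ (Finset.univ : Finset (Fin n)).offDiag, g p.2 p.1 := by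
      apply Finset.sum_nbij' (fun p => (p.2, p.1)) (fun p => (p.2, p.1)) <;>
        simp [Finset.mem_offDiag, eq_comm]
    have : (2 : ℂ) • ∑ p ∈ (Finset.univ : Finset (Fin n)).offDiag, g p.1 p.2 = 0 := by
      rw [two_smul]
      nth_rewrite 2 [hswap]
      rw [← Finset.sum_add_distrib]
      apply Finset.sum_eq_zero
      intro p hp
      rw [Finset.mem_offDiag] at hp
      rw [hg p.1 p.2 hp.2.2]
      abel
    exact (smul_eq_zero.mp this).resolve_left two_ne_zero
  rw [hdiag, hoff, add_zero]

noncomputable def Asm (k n : ℕ) (s : Fin n → ZMod 2) : Matrix (V k) (V k) ℂ :=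
  ((Real.sqrt n : ℝ) : ℂ)⁻¹ • ∑ t : Fin n, sgn (s t) • C k (t : ℕ)

lemma Asm_isHermitian (s : Fin n → ZMod 2) : (Asm k n s).IsHermitian := by
  unfold Asm
  show _ = _
  rw [Matrix.conjTranspose_smul, Matrix.conjTranspose_sum]
  congr 1
  · rw [star_inv₀]
    congr 1
    rw [Complex.star_def, Complex.conj_ofReal]
  · apply Finset.sum_congr rfl
    intro t _
    rw [Matrix.conjTranspose_smul, star_sgn, (C_isHermitian (k := k) (t : ℕ)).eq]

lemma Asm_sq (hn : n ≤ 2 * k + 1) (hn0 : 0 < n) (s : Fin n → ZMod 2) :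
    Asm k n s * Asm k n s = 1 := by
  unfold Asm
  rw [Matrix.smul_mul, Matrix.mul_smul, smul_smul, Finset.sum_mul]
  have hsum : ∑ t : Fin n, (sgn (s t) • C k (t : ℕ)) * (∑ t' : Fin n, sgn (s t') • C k (t' : ℕ))
      = (n : ℂ) • (1 : Matrix (V k) (V k) ℂ) := by
    have : ∀ t : Fin n, (sgn (s t) • C k (t : ℕ)) * (∑ t' : Fin n, sgn (s t') • C k (t' : ℕ))
        = ∑ t' : Fin n, (sgn (s t) * sgn (s t')) • (C k (t : ℕ) * C k (t' : ℕ)) := by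
      intro t
      rw [Finset.mul_sum]
      exact Finset.sum_congr rfl fun t' _ => by
        rw [Matrix.smul_mul, Matrix.mul_smul, smul_smul]
    rw [Finset.sum_congr rfl fun t _ => this t]
    rw [sum_offdiag_cancel]
    · have : ∀ t : Fin n, (sgn (s t) * sgn (s t)) • (C k (t : ℕ) * C k (t : ℕ))
          = (1 : Matrix (V k) (V k) ℂ) := by
        intro t
        rw [sgn_mul_self, C_sq, one_smul]
      rw [Finset.sum_congr rfl fun t _ => this t, Finset.sum_const, Finset.card_univ,
        Fintype.card_fin, ← Nat.cast_smul_eq_nsmul ℂ]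
    · intro t t' htt'
      have hne : (t : ℕ) ≠ (t' : ℕ) := fun hh => htt' (Fin.ext hh)
      have ht := t.isLt
      have ht' := t'.isLt
      rw [C_anticomm (by omega) (by omega) hne, smul_neg, mul_comm]
  rw [hsum, smul_smul]
  have hsqrt : (((Real.sqrt n : ℝ) : ℂ))⁻¹ * (((Real.sqrt n : ℝ) : ℂ))⁻¹ * (n : ℂ) = 1 := by
    rw [← mul_inv, ← Complex.ofReal_mul, Real.mul_self_sqrt (Nat.cast_nonneg n),
      Complex.ofReal_natCast, inv_mul_cancel₀ (Nat.cast_ne_zero.mpr hn0.ne')]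
  rw [hsqrt, one_smul]

lemma Asm_trace {n : ℕ} (hn : n ≤ 2 * k + 1) (s : Fin n → ZMod 2) (t : Fin n) :
    Matrix.trace (Asm k n s * C k (t : ℕ)) =
      ((Real.sqrt n : ℝ) : ℂ)⁻¹ * sgn (s t) * (2 : ℂ) ^ k := by
  unfold Asm
  rw [Matrix.smul_mul, Matrix.trace_smul, Finset.sum_mul, Matrix.trace_sum]
  have : ∀ u : Fin n, Matrix.trace ((sgn (s u) • C k (u : ℕ)) * C k (t : ℕ))
      = sgn (s u) * (if u = t then (2 : ℂ) ^ k else 0) := by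
    intro u
    rw [Matrix.smul_mul, Matrix.trace_smul, smul_eq_mul]
    congr 1
    have hu := u.isLt
    have ht := t.isLt
    rw [C_trace (by omega) (by omega)]
    congr 1
    simp [Fin.ext_iff]
  rw [Finset.sum_congr rfl fun u _ => this u]
  simp only [mul_ite, mul_zero, Finset.sum_ite_eq', Finset.mem_univ, if_pos]
  rw [smul_eq_mul, mul_assoc]

lemma corr_eq {m : ℕ} (hm : 0 < m) (M N : Matrix (Fin m) (Fin m) ℂ) :
    star (fun p : Fin m × Fin m =>
        if p.1 = p.2 then (Complex.ofReal (1 / Real.sqrt m)) else 0) ⬝ᵥ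
      ((M ⊗ₖ N) *ᵥ fun p : Fin m × Fin m =>
        if p.1 = p.2 then (Complex.ofReal (1 / Real.sqrt m)) else 0)
      = (m : ℂ)⁻¹ * ∑ x : Fin m, ∑ y : Fin m, M x y * N x y := by
  classical
  set c := Complex.ofReal (1 / Real.sqrt m) with hc
  have hstar : ∀ z : ℂ, star (if z = z then c else 0) = c := by intro z; simp [hc]
  have hcc : c * c = (m : ℂ)⁻¹ := by
    rw [hc, ← Complex.ofReal_mul]
    rw [div_mul_div_comm, one_mul, Real.mul_self_sqrt (Nat.cast_nonneg m)]
    rw [one_div, Complex.ofReal_inv, Complex.ofReal_natCast]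
  rw [dotProduct]
  rw [Fintype.sum_prod_type]
  have hinner : ∀ x1 x2 : Fin m,
      ((M ⊗ₖ N) *ᵥ fun p : Fin m × Fin m =>
        if p.1 = p.2 then c else 0) (x1, x2) = ∑ y : Fin m, M x1 y * N x2 y * c := by
    intro x1 x2
    rw [Matrix.mulVec, dotProduct, Fintype.sum_prod_type]
    apply Finset.sum_congr rfl
    intro y1 _
    rw [Finset.sum_eq_single y1]
    · simp [Matrix.kroneckerMap_apply]
    · intro y2 _ hy
      simp [Matrix.kroneckerMap_apply, Ne.symm hy]
    · simp
  have houter : ∀ x1 : Fin m, ∑ x2 : Fin m,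
      star (if x1 = x2 then c else 0) *
        ((M ⊗ₖ N) *ᵥ fun p : Fin m × Fin m => if p.1 = p.2 then c else 0) (x1, x2)
      = c * ∑ y : Fin m, M x1 y * N x1 y * c := by
    intro x1
    rw [Finset.sum_eq_single x1]
    · rw [hinner, if_pos rfl]
      congr 1
      rw [hc, Complex.star_def, Complex.conj_ofReal]
    · intro x2 _ hx
      simp [Ne.symm hx]
    · simp
  simp only [Pi.star_apply]
  rw [Finset.sum_congr rfl fun x1 _ => houter x1]
  rw [Finset.mul_sum]
  apply Finset.sum_congr rfl
  intro x _
  rw [Finset.mul_sum, Finset.mul_sum]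
  apply Finset.sum_congr rfl
  intro y _
  rw [← hcc]; ring

lemma norm_eq {m : ℕ} (hm : 0 < m) :
    star (fun p : Fin m × Fin m =>
        if p.1 = p.2 then (Complex.ofReal (1 / Real.sqrt m)) else 0) ⬝ᵥ
      (fun p : Fin m × Fin m =>
        if p.1 = p.2 then (Complex.ofReal (1 / Real.sqrt m)) else 0) = 1 := by
  classical
  set c := Complex.ofReal (1 / Real.sqrt m) with hc
  have hcc : c * c = (m : ℂ)⁻¹ := by
    rw [hc, ← Complex.ofReal_mul, div_mul_div_comm, one_mul,
      Real.mul_self_sqrt (Nat.cast_nonneg m), one_div, Complex.ofReal_inv,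
      Complex.ofReal_natCast]
  rw [dotProduct, Fintype.sum_prod_type]
  simp only [Pi.star_apply]
  have : ∀ x : Fin m, ∑ y : Fin m,
      star (if x = y then c else 0) * (if x = y then c else 0) = c * c := by
    intro x
    rw [Finset.sum_eq_single x]
    · rw [if_pos rfl, Complex.star_def, hc, Complex.conj_ofReal]
    · intro y _ hy
      rw [if_neg (Ne.symm hy), star_zero, zero_mul]
    · simp
  rw [Finset.sum_congr rfl fun x _ => this x, Finset.sum_const, Finset.card_univ,
    Fintype.card_fin, hcc, nsmul_eq_mul, mul_inv_cancel₀ (Nat.cast_ne_zero.mpr hm.ne')]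

lemma sgn_ofReal (z : ZMod 2) :
    sgn z = Complex.ofReal (if z = 0 then (1 : ℝ) else -1) := by
  rcases z2cases z with h | h <;> subst h <;>
    simp [sgn, (by decide : (1 : ZMod 2) ≠ 0)]

lemma trace_mul_eq {m : Type*} [Fintype m] (M N : Matrix m m ℂ) :
    ∑ x : m, ∑ y : m, M x y * Nᵀ x y = Matrix.trace (M * N) := by
  rw [Matrix.trace]
  apply Finset.sum_congr rfl
  intro x _
  rw [Matrix.diag_apply, Matrix.mul_apply]
  rfl

end IndexOpt

open IndexOpt

/-- For every `n ≥ 2`, with `d = 2^⌊n/2⌋` and `ψ` the maximally entangled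
unit vector in `ℂ^d ⊗ ℂ^d`, there are Hermitian `±1`-observables `A s`, `B t` whose
correlations are exactly `(−1)^{s_t}/√n`; consequently the resulting INDEX game strategy
has bias exactly `1/√n`. -/
theorem exists_optimal_index_game_strategy (n : ℕ) (hn : 2 ≤ n) :
    ∃ (A : (Fin n → ZMod 2) → Matrix (Fin (2 ^ (n / 2))) (Fin (2 ^ (n / 2))) ℂ)
      (B : Fin n → Matrix (Fin (2 ^ (n / 2))) (Fin (2 ^ (n / 2))) ℂ),
      (∀ s, (A s).IsHermitian) ∧ (∀ s, A s * A s = 1) ∧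
      (∀ t, (B t).IsHermitian) ∧ (∀ t, B t * B t = 1) ∧
      -- the maximally entangled state ψ is a unit vector
      (star (fun p : Fin (2 ^ (n / 2)) × Fin (2 ^ (n / 2)) =>
          if p.1 = p.2 then (Complex.ofReal (1 / Real.sqrt (2 ^ (n / 2)))) else 0) ⬝ᵥ
        (fun p : Fin (2 ^ (n / 2)) × Fin (2 ^ (n / 2)) =>
          if p.1 = p.2 then (Complex.ofReal (1 / Real.sqrt (2 ^ (n / 2)))) else 0) = 1) ∧
      -- pointwise correlations
      (∀ (s : Fin n → ZMod 2) (t : Fin n),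
        (star (fun p : Fin (2 ^ (n / 2)) × Fin (2 ^ (n / 2)) =>
            if p.1 = p.2 then (Complex.ofReal (1 / Real.sqrt (2 ^ (n / 2)))) else 0) ⬝ᵥ
          ((A s ⊗ₖ B t) *ᵥ (fun p : Fin (2 ^ (n / 2)) × Fin (2 ^ (n / 2)) =>
            if p.1 = p.2 then (Complex.ofReal (1 / Real.sqrt (2 ^ (n / 2)))) else 0))).re =
        (if s t = 0 then (1 : ℝ) else -1) / Real.sqrt n) ∧
      -- the bias is exactly 1/√n
      (1 / (n * 2 ^ n) : ℝ) * ∑ s : Fin n → ZMod 2, ∑ t : Fin n,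
        (if s t = 0 then (1 : ℝ) else -1) *
          (star (fun p : Fin (2 ^ (n / 2)) × Fin (2 ^ (n / 2)) =>
              if p.1 = p.2 then (Complex.ofReal (1 / Real.sqrt (2 ^ (n / 2)))) else 0) ⬝ᵥ
            ((A s ⊗ₖ B t) *ᵥ (fun p : Fin (2 ^ (n / 2)) × Fin (2 ^ (n / 2)) =>
              if p.1 = p.2 then (Complex.ofReal (1 / Real.sqrt (2 ^ (n / 2)))) else 0))).re
        = 1 / Real.sqrt n := by
  classical
  set k := n / 2 with hk
  have hnk : n ≤ 2 * k + 1 := by omega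
  have hn0 : 0 < n := by omega
  have hd : 0 < 2 ^ k := by positivity
  let e : V k ≃ Fin (2 ^ k) := Fintype.equivFinOfCardEq card_V
  have hsqn : Real.sqrt n ≠ 0 := by
    have : (0 : ℝ) < n := by exact_mod_cast hn0
    positivity
  have key : ∀ (s : Fin n → ZMod 2) (t : Fin n),
      (star (fun p : Fin (2 ^ k) × Fin (2 ^ k) =>
          if p.1 = p.2 then (Complex.ofReal (1 / Real.sqrt (2 ^ k))) else 0) ⬝ᵥ
        (((Asm k n s).submatrix e.symm e.symm ⊗ₖ ((C k (t : ℕ))ᵀ).submatrix e.symm e.symm) *ᵥ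
          (fun p : Fin (2 ^ k) × Fin (2 ^ k) =>
            if p.1 = p.2 then (Complex.ofReal (1 / Real.sqrt (2 ^ k))) else 0)))
      = Complex.ofReal ((if s t = 0 then (1 : ℝ) else -1) / Real.sqrt n) := by
    intro s t
    have hd : (0:ℕ) < 2 ^ k := by positivity
    have h1 := corr_eq hd ((Asm k n s).submatrix e.symm e.symm)
      (((C k (t : ℕ))ᵀ).submatrix e.symm e.symm)
    have hcast : (((2 : ℕ) ^ k : ℕ) : ℝ) = (2 : ℝ) ^ k := by push_cast; ring
    rw [hcast] at h1
    rw [h1]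
    have h2 : ∑ x : Fin (2 ^ k), ∑ y : Fin (2 ^ k),
        (Asm k n s).submatrix e.symm e.symm x y *
          ((C k (t : ℕ))ᵀ).submatrix e.symm e.symm x y
        = Matrix.trace (Asm k n s * C k (t : ℕ)) := by
      rw [← trace_mul_eq]
      apply Fintype.sum_equiv e.symm
      intro x
      apply Fintype.sum_equiv e.symm
      intro y
      rfl
    rw [h2, Asm_trace hnk, sgn_ofReal]
    have h2k : ((2 : ℂ) ^ k) ≠ 0 := pow_ne_zero _ two_ne_zero
    have hcast2 : (((2 : ℕ) ^ k : ℕ) : ℂ) = (2 : ℂ) ^ k := by push_cast; ring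
    rw [hcast2, Complex.ofReal_div]
    field_simp
  refine ⟨fun s => (Asm k n s).submatrix e.symm e.symm,
    fun t => ((C k (t : ℕ))ᵀ).submatrix e.symm e.symm, ?_, ?_, ?_, ?_, ?_, ?_, ?_⟩
  · intro s
    show _ = _
    rw [Matrix.conjTranspose_submatrix, (Asm_isHermitian s).eq]
  · intro s
    rw [Matrix.submatrix_mul_equiv, Asm_sq hnk hn0, Matrix.submatrix_one_equiv]
  · intro t
    show _ = _
    rw [Matrix.conjTranspose_submatrix]
    have htr : (C k (t : ℕ))ᵀᴴ = (C k (t : ℕ))ᵀ := by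
      ext x y
      rw [Matrix.conjTranspose_apply, Matrix.transpose_apply, Matrix.transpose_apply,
        ← Matrix.conjTranspose_apply, (C_isHermitian _).eq]
    rw [htr]
  · intro t
    rw [Matrix.submatrix_mul_equiv, ← Matrix.transpose_mul, C_sq,
      Matrix.transpose_one, Matrix.submatrix_one_equiv]
  · simpa using norm_eq hd
  · intro s t
    rw [key s t, Complex.ofReal_re]
  · have hterm : ∀ (s : Fin n → ZMod 2) (t : Fin n),
        (if s t = 0 then (1 : ℝ) else -1) *
          (Complex.ofReal ((if s t = 0 then (1 : ℝ) else -1) / Real.sqrt n)).re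
        = 1 / Real.sqrt n := by
      intro s t
      rw [Complex.ofReal_re]
      split_ifs <;> ring
    have hrw : ∀ (s : Fin n → ZMod 2) (t : Fin n),
        (if s t = 0 then (1 : ℝ) else -1) *
          (star (fun p : Fin (2 ^ k) × Fin (2 ^ k) =>
              if p.1 = p.2 then (Complex.ofReal (1 / Real.sqrt (2 ^ k))) else 0) ⬝ᵥ
            (((Asm k n s).submatrix e.symm e.symm ⊗ₖ
                ((C k (t : ℕ))ᵀ).submatrix e.symm e.symm) *ᵥ
              (fun p : Fin (2 ^ k) × Fin (2 ^ k) =>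
                if p.1 = p.2 then (Complex.ofReal (1 / Real.sqrt (2 ^ k))) else 0))).re
        = 1 / Real.sqrt n := by
      intro s t
      rw [key s t]
      exact hterm s t
    rw [Finset.sum_congr rfl fun s _ => Finset.sum_congr rfl fun t _ => hrw s t]
    rw [Finset.sum_const, Finset.sum_const, Finset.card_univ, Finset.card_univ,
      Fintype.card_fin]
    have hcard : Fintype.card (Fin n → ZMod 2) = 2 ^ n := by
      simp [Fintype.card_fun, ZMod.card]
    rw [hcard, nsmul_eq_mul, nsmul_eq_mul]
    have h2n : ((2 : ℝ) ^ n) ≠ 0 := by positivity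
    have hnne : (n : ℝ) ≠ 0 := Nat.cast_ne_zero.mpr hn0.ne'
    field_simp
    norm_num
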